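/- Statement A ('every antipodal 2-colouring of E(Q_n) contains a monochromatic geodesic between some pair of antipodal vertices', for all n ≥ 2) holds if and only if statement B ('in every 2-colouring of E(Q_n) there is a geodesic between a pair of antipodal vertices which changes colour at most once', for all n ≥ 2) holds. -/

import Mathlib

open SimpleGraph Finset
open scoped symmDiff

/-- The hypercube `Q_n` on vertex set `{0,1}^n`: two vertices are adjacent iff they
differ in exactly one coordinate. -/
def Q (n : ℕ) : SimpleGraph (Fin n → Bool) where
  Adj x y := hammingDist x y = 1
  symm := ⟨fun x y h => (hammingDist_comm y x).trans h⟩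
  loopless := ⟨fun x h => by simp at h⟩

/-- The coordinate direction of a step from `x` to `y` (for an edge of `Q n`, the unique
coordinate where they differ), as a natural number. -/
def dir {n : ℕ} (x y : Fin n → Bool) : ℕ :=
  (Finset.univ.filter fun i => x i ≠ y i).sup fun i => (i : ℕ)

/-- The list of coordinate directions of the edges of a walk in `Q n`. -/
def dirs {n : ℕ} {u v : Fin n → Bool} (p : (Q n).Walk u v) : List ℕ :=
  p.darts.map fun d => dir d.fst d.snd

/-- A geodesic in `Q n`: a path no two of whose edges lie in the same coordinate
direction. -/
def IsGeodesic {n : ℕ} {u v : Fin n → Bool} (p : (Q n).Walk u v) : Prop :=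
  p.IsPath ∧ (dirs p).Nodup

/-- An increasing geodesic in `Q n`: a path whose successive edge directions strictly
increase. -/
def IsIncGeodesic {n : ℕ} {u v : Fin n → Bool} (p : (Q n).Walk u v) : Prop :=
  p.IsPath ∧ (dirs p).Chain' (· < ·)

/-- `maxInc G x` is the maximum length of an increasing geodesic contained in the
subgraph `G` of `Q n` and ending at the vertex `x`. -/
noncomputable def maxInc {n : ℕ} (G : (Q n).Subgraph) (x : Fin n → Bool) : ℕ :=
  sSup {l | ∃ u, ∃ p : (Q n).Walk u x, p.toSubgraph ≤ G ∧ IsIncGeodesic p ∧ p.length = l}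
/-- The antipodal vertex of `x` in `Q n`: flip every coordinate. -/
def antip {n : ℕ} (x : Fin n → Bool) : Fin n → Bool := fun i => !x i

/-- A 2-colouring of the edges of `Q n` is antipodal if every pair of antipodal edges
receives different colours. -/
def IsAntipodalColouring (n : ℕ) (c : Sym2 (Fin n → Bool) → Bool) : Prop :=
  ∀ x y : Fin n → Bool, (Q n).Adj x y → c s(x, y) ≠ c s(antip x, antip y)

/-- A walk changes colour at most once under `c`: its edge list splits as a block of one
colour followed by a (possibly empty) block of the other colour. -/
def ChangesAtMostOnce {n : ℕ} (c : Sym2 (Fin n → Bool) → Bool) {u v : Fin n → Bool}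
    (p : (Q n).Walk u v) : Prop :=
  ∃ (l₁ l₂ : List (Sym2 (Fin n → Bool))) (b : Bool),
    p.edges = l₁ ++ l₂ ∧ (∀ e ∈ l₁, c e = b) ∧ (∀ e ∈ l₂, c e = !b)

/-- A walk is monochromatic under `c`. -/
def Mono {n : ℕ} (c : Sym2 (Fin n → Bool) → Bool) {u v : Fin n → Bool}
    (p : (Q n).Walk u v) : Prop :=
  ∃ b : Bool, ∀ e ∈ p.edges, c e = b

/-- Statement A: for all `n ≥ 2`, every antipodal 2-colouring of `E(Q n)` contains a
monochromatic geodesic between some pair of antipodal vertices. -/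
def StatementA : Prop :=
  ∀ n : ℕ, 2 ≤ n → ∀ c : Sym2 (Fin n → Bool) → Bool, IsAntipodalColouring n c →
    ∃ (u : Fin n → Bool) (p : (Q n).Walk u (antip u)), IsGeodesic p ∧ Mono c p

/-- Statement B: for all `n ≥ 2`, in every 2-colouring of `E(Q n)` there is a geodesic
between a pair of antipodal vertices which changes colour at most once. -/
def StatementB : Prop :=
  ∀ n : ℕ, 2 ≤ n → ∀ c : Sym2 (Fin n → Bool) → Bool,
    ∃ (u : Fin n → Bool) (p : (Q n).Walk u (antip u)), IsGeodesic p ∧ ChangesAtMostOnce c p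


section Aux

variable {n : ℕ}

lemma antip_antip (x : Fin n → Bool) : antip (antip x) = x :=
  funext fun i => Bool.not_not _

lemma Q_adj_iff {x y : Fin n → Bool} (h : (Q n).Adj x y) :
    ∃ j : Fin n, (∀ i, x i ≠ y i ↔ i = j) ∧ dir x y = (j : ℕ) := by
  have h' : (Finset.univ.filter fun i => x i ≠ y i).card = 1 := h
  obtain ⟨j, hj⟩ := Finset.card_eq_one.mp h'
  refine ⟨j, fun i => ?_, ?_⟩
  · constructor
    · intro hi
      have : i ∈ (Finset.univ.filter fun i => x i ≠ y i) := by
        simp [hi]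
      rw [hj] at this; simpa using this
    · rintro rfl
      have : i ∈ (Finset.univ.filter fun k => x k ≠ y k) := by
        rw [hj]; exact Finset.mem_singleton_self i
      simpa using this
  · unfold dir
    rw [hj, Finset.sup_singleton]

lemma Q_adj_of {x y : Fin n → Bool} (j : Fin n) (h : ∀ i, x i ≠ y i ↔ i = j) :
    (Q n).Adj x y ∧ dir x y = (j : ℕ) := by
  have hf : (Finset.univ.filter fun i => x i ≠ y i) = {j} := by
    ext i; simp [h i]
  constructor
  · show (Finset.univ.filter fun i => x i ≠ y i).card = 1
    rw [hf]; simp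
  · unfold dir; rw [hf, Finset.sup_singleton]

lemma dir_antip (x y : Fin n → Bool) : dir (antip x) (antip y) = dir x y := by
  unfold dir antip
  congr 1
  ext i
  simp

/-- The antipodal map as a graph homomorphism. -/
@[reducible] def antipHom : Q n →g Q n where
  toFun := antip
  map_rel' := by
    intro x y h
    show (Finset.univ.filter fun i => antip x i ≠ antip y i).card = 1
    have : (Finset.univ.filter fun i => antip x i ≠ antip y i)
        = (Finset.univ.filter fun i => x i ≠ y i) := by
      ext i; simp [antip]
    rw [this]; exact h

lemma dirs_cons {u v w : Fin n → Bool} (h : (Q n).Adj u v) (p : (Q n).Walk v w) :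
    dirs (SimpleGraph.Walk.cons h p) = dir u v :: dirs p := rfl

lemma dirs_append {u v w : Fin n → Bool} (p : (Q n).Walk u v) (q : (Q n).Walk v w) :
    dirs (p.append q) = dirs p ++ dirs q := by
  simp [dirs, SimpleGraph.Walk.darts_append]

lemma dirs_copy {u v u' v' : Fin n → Bool} (p : (Q n).Walk u v) (hu : u = u') (hv : v = v') :
    dirs (p.copy hu hv) = dirs p := by
  simp [dirs, SimpleGraph.Walk.darts_copy]

lemma dirs_map_antip {u v : Fin n → Bool} (p : (Q n).Walk u v) :
    dirs (p.map antipHom) = dirs p := by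
  unfold dirs
  rw [SimpleGraph.Walk.darts_map, List.map_map]
  refine List.map_congr_left fun d _ => ?_
  exact dir_antip d.fst d.snd

lemma apply_eq_of_not_mem_dirs {u v : Fin n → Bool} (p : (Q n).Walk u v)
    (i : Fin n) (h : (i : ℕ) ∉ dirs p) : ∀ w ∈ p.support, w i = u i := by
  induction p with
  | nil => simp
  | @cons u b v hadj q ih =>
    rw [dirs_cons, List.mem_cons] at h
    push_neg at h
    obtain ⟨j, hj, hdj⟩ := Q_adj_iff hadj
    have hub : u i = b i := by
      by_contra hne
      have : i = j := (hj i).mp hne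
      exact h.1 (by rw [this, hdj])
    intro w hw
    rw [SimpleGraph.Walk.support_cons, List.mem_cons] at hw
    rcases hw with rfl | hw
    · rfl
    · rw [ih h.2 w hw, hub]

lemma isPath_of_nodup_dirs {u v : Fin n → Bool} (p : (Q n).Walk u v)
    (h : (dirs p).Nodup) : p.IsPath := by
  induction p with
  | nil => exact SimpleGraph.Walk.IsPath.nil
  | @cons u b v hadj q ih =>
    rw [dirs_cons, List.nodup_cons] at h
    refine (ih h.2).cons ?_
    intro hu
    obtain ⟨j, hj, hdj⟩ := Q_adj_iff hadj
    have h1 : u j ≠ b j := (hj j).mpr rfl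
    have h2 : u j = b j := by
      refine apply_eq_of_not_mem_dirs q j ?_ u hu
      rw [← hdj]; exact h.1
    exact h1 h2

lemma antip_colour_eq {c : Sym2 (Fin n → Bool) → Bool} (hc : IsAntipodalColouring n c)
    {x y : Fin n → Bool} (h : (Q n).Adj x y) :
    c s(antip x, antip y) = !(c s(x, y)) := by
  have := hc x y h
  cases h1 : c s(x, y) <;> cases h2 : c s(antip x, antip y) <;> simp_all

lemma split_by_edges {u v : Fin n → Bool} (p : (Q n).Walk u v) :
    ∀ l₁ l₂, p.edges = l₁ ++ l₂ →
      ∃ (w : Fin n → Bool) (p₁ : (Q n).Walk u w) (p₂ : (Q n).Walk w v),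
        p = p₁.append p₂ ∧ p₁.edges = l₁ ∧ p₂.edges = l₂ := by
  induction p with
  | nil =>
    intro l₁ l₂ h
    simp only [SimpleGraph.Walk.edges_nil] at h
    obtain ⟨h1, h2⟩ := (List.append_eq_nil_iff).mp h.symm
    exact ⟨_, SimpleGraph.Walk.nil, SimpleGraph.Walk.nil, rfl, by simp [h1], by simp [h2]⟩
  | @cons u b v hadj q ih =>
    intro l₁ l₂ h
    cases l₁ with
    | nil =>
      exact ⟨u, SimpleGraph.Walk.nil, SimpleGraph.Walk.cons hadj q, rfl, rfl, by simpa using h⟩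
    | cons e l₁' =>
      rw [SimpleGraph.Walk.edges_cons, List.cons_append] at h
      obtain ⟨he, hq⟩ := List.cons_eq_cons.mp h
      obtain ⟨w, p₁, p₂, hp, h1, h2⟩ := ih l₁' l₂ hq
      exact ⟨w, SimpleGraph.Walk.cons hadj p₁, p₂, by rw [SimpleGraph.Walk.cons_append, hp],
        by rw [SimpleGraph.Walk.edges_cons, h1, he], h2⟩

lemma split_at_dir {u v : Fin n → Bool} (p : (Q n).Walk u v) (d : ℕ) :
    d ∈ dirs p →
      ∃ (w w' : Fin n → Bool) (p₁ : (Q n).Walk u w) (hadj : (Q n).Adj w w')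
        (p₂ : (Q n).Walk w' v),
        dirs p = dirs p₁ ++ dir w w' :: dirs p₂ ∧ dir w w' = d ∧
        p.edges = p₁.edges ++ s(w, w') :: p₂.edges := by
  induction p with
  | nil => intro h; simp [dirs] at h
  | @cons u b v hadj q ih =>
    intro hd
    by_cases hfirst : dir u b = d
    · exact ⟨u, b, SimpleGraph.Walk.nil, hadj, q, by simp [dirs_cons, dirs], hfirst, by simp⟩
    · have hd' : d ∈ dirs q := by
        rw [dirs_cons, List.mem_cons] at hd
        rcases hd with h | h
        · exact absurd h.symm hfirst
        · exact h
      obtain ⟨w, w', p₁, ha, p₂, h1, h2, h3⟩ := ih hd'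
      refine ⟨w, w', SimpleGraph.Walk.cons hadj p₁, ha, p₂, ?_, h2, ?_⟩
      · rw [dirs_cons, h1, dirs_cons, List.cons_append]
      · rw [SimpleGraph.Walk.edges_cons, h3, SimpleGraph.Walk.edges_cons, List.cons_append]

/-- Projection `{0,1}^{n+1} → {0,1}^n` forgetting the last coordinate. -/
def projQ (x : Fin (n + 1) → Bool) : Fin n → Bool := fun i => x i.castSucc

lemma projQ_antip (x : Fin (n + 1) → Bool) : projQ (antip x) = antip (projQ x) := rfl

lemma proj_adj {x y : Fin (n + 1) → Bool} (h : (Q (n + 1)).Adj x y) (hd : dir x y ≠ n) :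
    (Q n).Adj (projQ x) (projQ y) ∧ dir (projQ x) (projQ y) = dir x y ∧
      x (Fin.last n) = y (Fin.last n) := by
  obtain ⟨j, hj, hdj⟩ := Q_adj_iff h
  have hj' : j ≠ Fin.last n := by
    rintro rfl
    exact hd (by rw [hdj]; simp)
  obtain ⟨i, rfl⟩ := Fin.exists_castSucc_eq.mpr hj'
  have key : ∀ k : Fin n, projQ x k ≠ projQ y k ↔ k = i := by
    intro k
    unfold projQ
    rw [hj k.castSucc, Fin.castSucc_inj]
  obtain ⟨hadj, hdir'⟩ := Q_adj_of i key
  refine ⟨hadj, by rw [hdir', hdj]; simp, ?_⟩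
  by_contra hne
  exact hj' ((hj (Fin.last n)).mp hne).symm

lemma proj_walk {u v : Fin (n + 1) → Bool} (P : (Q (n + 1)).Walk u v)
    (h : (n : ℕ) ∉ dirs P) :
    ∃ q : (Q n).Walk (projQ u) (projQ v), dirs q = dirs P ∧
      ∀ (f : Sym2 (Fin n → Bool) → Bool) (b : Bool),
        (∀ x y, (Q (n + 1)).Adj x y → s(x, y) ∈ P.edges → f s(projQ x, projQ y) = b) →
        ∀ e ∈ q.edges, f e = b := by
  induction P with
  | nil => exact ⟨SimpleGraph.Walk.nil, rfl, by simp⟩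
  | @cons u b v hadj q ih =>
    rw [dirs_cons, List.mem_cons] at h
    push_neg at h
    obtain ⟨hadj', hdir', _⟩ := proj_adj hadj (fun hh => h.1 hh.symm)
    obtain ⟨q', hq'd, hq'c⟩ := ih h.2
    refine ⟨SimpleGraph.Walk.cons hadj' q', ?_, ?_⟩
    · rw [dirs_cons, hq'd, hdir', dirs_cons]
    · intro f bb H e he
      rw [SimpleGraph.Walk.edges_cons, List.mem_cons] at he
      rcases he with rfl | he
      · exact H u b hadj (by simp)
      · refine hq'c f bb (fun x y hxy hmem => H x y hxy ?_) e he
        rw [SimpleGraph.Walk.edges_cons]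
        exact List.mem_cons_of_mem _ hmem

/-- Lift a colouring of `Q n` to an antipodal colouring of `Q (n+1)`. -/
def lift1 (c : Sym2 (Fin n → Bool) → Bool) : Sym2 (Fin (n + 1) → Bool) → Bool :=
  Sym2.lift ⟨fun x y =>
    if x (Fin.last n) = y (Fin.last n) then
      (if x (Fin.last n) then !(c s(antip (projQ x), antip (projQ y)))
       else c s(projQ x, projQ y))
    else x 0 && y 0, by
      intro x y
      dsimp only
      by_cases h : x (Fin.last n) = y (Fin.last n)
      · rw [if_pos h, if_pos h.symm, h]
        by_cases h2 : y (Fin.last n) = true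
        · rw [if_pos h2, if_pos h2, Sym2.eq_swap]
        · rw [if_neg h2, if_neg h2, Sym2.eq_swap]
      · rw [if_neg h, if_neg (fun h' => h h'.symm), Bool.and_comm]⟩

lemma lift1_false (c : Sym2 (Fin n → Bool) → Bool) {x y : Fin (n + 1) → Bool}
    (hx : x (Fin.last n) = false) (hy : y (Fin.last n) = false) :
    lift1 c s(x, y) = c s(projQ x, projQ y) := by
  unfold lift1
  rw [Sym2.lift_mk]
  simp [hx, hy]

lemma lift1_true (c : Sym2 (Fin n → Bool) → Bool) {x y : Fin (n + 1) → Bool}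
    (hx : x (Fin.last n) = true) (hy : y (Fin.last n) = true) :
    lift1 c s(x, y) = !(c s(antip (projQ x), antip (projQ y))) := by
  unfold lift1
  rw [Sym2.lift_mk]
  simp [hx, hy]

lemma lift1_vert (c : Sym2 (Fin n → Bool) → Bool) {x y : Fin (n + 1) → Bool}
    (hxy : x (Fin.last n) ≠ y (Fin.last n)) :
    lift1 c s(x, y) = (x 0 && y 0) := by
  unfold lift1
  rw [Sym2.lift_mk]
  simp [hxy]

lemma lift1_antipodal (hn : 2 ≤ n) (c : Sym2 (Fin n → Bool) → Bool) :
    IsAntipodalColouring (n + 1) (lift1 c) := by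
  intro x y h
  obtain ⟨j, hj, hdj⟩ := Q_adj_iff h
  by_cases hlast : j = Fin.last n
  · subst hlast
    have hxy : x (Fin.last n) ≠ y (Fin.last n) := (hj _).mpr rfl
    have h0ne : (0 : Fin (n + 1)) ≠ Fin.last n := by
      intro hh
      have := congrArg Fin.val hh
      simp only [Fin.val_zero, Fin.val_last] at this
      omega
    have h0 : x 0 = y 0 := by
      by_contra h0
      exact h0ne ((hj 0).mp h0)
    have hxy' : antip x (Fin.last n) ≠ antip y (Fin.last n) := by
      simp only [antip, ne_eq, Bool.not_inj_iff]
      exact hxy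
    rw [lift1_vert c hxy, lift1_vert c hxy']
    simp only [antip, h0]
    cases y 0 <;> simp
  · have hxy : x (Fin.last n) = y (Fin.last n) := by
      by_contra hne
      exact hlast ((hj _).mp hne).symm
    have hxy' : antip x (Fin.last n) = antip y (Fin.last n) := by
      simp only [antip, hxy]
    cases hb : x (Fin.last n)
    · have hyb : y (Fin.last n) = false := hxy ▸ hb
      have hax : antip x (Fin.last n) = true := by simp [antip, hb]
      have hay : antip y (Fin.last n) = true := by simp [antip, hyb]
      rw [lift1_false c hb hyb, lift1_true c hax hay]
      rw [projQ_antip, projQ_antip, antip_antip, antip_antip]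
      simp
    · have hyb : y (Fin.last n) = true := hxy ▸ hb
      have hax : antip x (Fin.last n) = false := by simp [antip, hb]
      have hay : antip y (Fin.last n) = false := by simp [antip, hyb]
      rw [lift1_true c hb hyb, lift1_false c hax hay]
      rw [projQ_antip, projQ_antip]
      simp

end Aux

/-- Statement A holds (for all `n`) if and only if Statement B holds (for all `n`). -/
theorem stmt12 : StatementA ↔ StatementB := by
  constructor
  · -- A → B
    intro hA n hn c
    obtain ⟨U, P, ⟨hPpath, hPnodup⟩, b, hmono⟩ :=
      hA (n + 1) (by omega) (lift1 c) (lift1_antipodal hn c)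
    have hmem : (n : ℕ) ∈ dirs P := by
      by_contra hmem
      have := apply_eq_of_not_mem_dirs P (Fin.last n) (by simpa using hmem)
        (antip U) P.end_mem_support
      simp [antip] at this
    obtain ⟨w, w', P₁, hadj, P₂, hdirsplit, hd, hesplit⟩ := split_at_dir P n hmem
    rw [hd] at hdirsplit
    have hnodup' := hPnodup
    rw [hdirsplit] at hnodup'
    have hn1 : (n : ℕ) ∉ dirs P₁ := fun hh =>
      (List.disjoint_of_nodup_append hnodup') hh List.mem_cons_self
    have hn2 : (n : ℕ) ∉ dirs P₂ :=
      (List.nodup_cons.mp (List.nodup_append.mp hnodup').2.1).1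
    have hnodup12 : (dirs P₁ ++ dirs P₂).Nodup :=
      hnodup'.sublist ((List.sublist_cons_self _ _).append_left _)
    -- level facts
    have hlevel₁ : ∀ z ∈ P₁.support, z (Fin.last n) = U (Fin.last n) :=
      apply_eq_of_not_mem_dirs P₁ (Fin.last n) (by simpa using hn1)
    have hlevel₂ : ∀ z ∈ P₂.support, z (Fin.last n) = w' (Fin.last n) :=
      apply_eq_of_not_mem_dirs P₂ (Fin.last n) (by simpa using hn2)
    have hw : w (Fin.last n) = U (Fin.last n) :=
      hlevel₁ w P₁.end_mem_support
    obtain ⟨j, hj, hdj⟩ := Q_adj_iff hadj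
    have hjlast : j = Fin.last n := by
      apply Fin.ext
      rw [Fin.val_last, ← hdj, hd]
    have hww' : w' (Fin.last n) = !(w (Fin.last n)) := by
      have hne := (hj (Fin.last n)).mpr hjlast.symm
      cases hwv : w (Fin.last n) <;> cases hw'v : w' (Fin.last n) <;> simp_all
    have hprojw : projQ w' = projQ w := by
      funext i
      have hic : ¬ (w i.castSucc ≠ w' i.castSucc) := by
        rw [hj, hjlast]
        exact (Fin.castSucc_lt_last i).ne
      push_neg at hic
      exact hic.symm
    obtain ⟨q₁, hq₁d, hq₁c⟩ := proj_walk P₁ hn1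
    obtain ⟨q₂, hq₂d, hq₂c⟩ := proj_walk P₂ hn2
    have hmem₁ : ∀ e, e ∈ P₁.edges → e ∈ P.edges := by
      intro e he; rw [hesplit]; exact List.mem_append_left _ he
    have hmem₂ : ∀ e, e ∈ P₂.edges → e ∈ P.edges := by
      intro e he; rw [hesplit]
      exact List.mem_append_right _ (List.mem_cons_of_mem _ he)
    cases hU : U (Fin.last n)
    case false =>
      have hcol₁ : ∀ x y, (Q (n + 1)).Adj x y → s(x, y) ∈ P₁.edges →
          c s(projQ x, projQ y) = b := by
        intro x y hxy he
        have hx := hlevel₁ x (P₁.fst_mem_support_of_mem_edges he)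
        have hy := hlevel₁ y (P₁.snd_mem_support_of_mem_edges he)
        rw [hU] at hx hy
        have h5 := hmono _ (hmem₁ _ he)
        rwa [lift1_false c hx hy] at h5
      have hcol₂ : ∀ x y, (Q (n + 1)).Adj x y → s(x, y) ∈ P₂.edges →
          (fun e => c (Sym2.map antip e)) s(projQ x, projQ y) = !b := by
        intro x y hxy he
        have hx := hlevel₂ x (P₂.fst_mem_support_of_mem_edges he)
        have hy := hlevel₂ y (P₂.snd_mem_support_of_mem_edges he)
        rw [hww', hw, hU] at hx hy
        have h5 := hmono _ (hmem₂ _ he)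
        rw [lift1_true c hx hy] at h5
        simp only [Sym2.map_pair_eq]
        rw [← h5, Bool.not_not]
      have hq₁col : ∀ e ∈ q₁.edges, c e = b := hq₁c c b hcol₁
      have hq₂col : ∀ e ∈ q₂.edges, c (Sym2.map antip e) = !b :=
        hq₂c (fun e => c (Sym2.map antip e)) (!b) hcol₂
      have hdq : dirs ((((q₂.copy hprojw (projQ_antip U)).map antipHom).copy rfl
            (antip_antip (projQ U))).append q₁) = dirs P₂ ++ dirs P₁ := by
        rw [dirs_append, dirs_copy, dirs_map_antip, dirs_copy, hq₂d, hq₁d]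
      have hnodF : (dirs P₂ ++ dirs P₁).Nodup := List.nodup_append_comm.mp hnodup12
      have heq : (((((q₂.copy hprojw (projQ_antip U)).map antipHom).copy rfl
            (antip_antip (projQ U))).append q₁).copy rfl
            (antip_antip (projQ w)).symm).edges
          = q₂.edges.map (Sym2.map antip) ++ q₁.edges := by
        rw [SimpleGraph.Walk.edges_copy, SimpleGraph.Walk.edges_append,
          SimpleGraph.Walk.edges_copy, SimpleGraph.Walk.edges_map,
          SimpleGraph.Walk.edges_copy]
        rfl
      refine ⟨antip (projQ w),
        (((((q₂.copy hprojw (projQ_antip U)).map antipHom).copy rfl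
            (antip_antip (projQ U))).append q₁).copy rfl (antip_antip (projQ w)).symm),
        ⟨isPath_of_nodup_dirs _ (by rw [dirs_copy, hdq]; exact hnodF),
          by rw [dirs_copy, hdq]; exact hnodF⟩,
        q₂.edges.map (Sym2.map antip), q₁.edges, !b, heq, ?_, ?_⟩
      · intro e he
        obtain ⟨e', he', rfl⟩ := List.mem_map.mp he
        exact hq₂col e' he'
      · intro e he
        rw [Bool.not_not]
        exact hq₁col e he
    case true =>
      have hcol₁ : ∀ x y, (Q (n + 1)).Adj x y → s(x, y) ∈ P₁.edges →
          (fun e => c (Sym2.map antip e)) s(projQ x, projQ y) = !b := by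
        intro x y hxy he
        have hx := hlevel₁ x (P₁.fst_mem_support_of_mem_edges he)
        have hy := hlevel₁ y (P₁.snd_mem_support_of_mem_edges he)
        rw [hU] at hx hy
        have h5 := hmono _ (hmem₁ _ he)
        rw [lift1_true c hx hy] at h5
        simp only [Sym2.map_pair_eq]
        rw [← h5, Bool.not_not]
      have hcol₂ : ∀ x y, (Q (n + 1)).Adj x y → s(x, y) ∈ P₂.edges →
          c s(projQ x, projQ y) = b := by
        intro x y hxy he
        have hx := hlevel₂ x (P₂.fst_mem_support_of_mem_edges he)
        have hy := hlevel₂ y (P₂.snd_mem_support_of_mem_edges he)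
        rw [hww', hw, hU] at hx hy
        have h5 := hmono _ (hmem₂ _ he)
        rwa [lift1_false c hx hy] at h5
      have hq₁col : ∀ e ∈ q₁.edges, c (Sym2.map antip e) = !b :=
        hq₁c (fun e => c (Sym2.map antip e)) (!b) hcol₁
      have hq₂col : ∀ e ∈ q₂.edges, c e = b := hq₂c c b hcol₂
      have hdq : dirs ((q₂.copy hprojw (projQ_antip U)).append (q₁.map antipHom))
          = dirs P₂ ++ dirs P₁ := by
        rw [dirs_append, dirs_copy, dirs_map_antip, hq₂d, hq₁d]
      have hnodF : (dirs P₂ ++ dirs P₁).Nodup := List.nodup_append_comm.mp hnodup12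
      have heq : ((q₂.copy hprojw (projQ_antip U)).append (q₁.map antipHom)).edges
          = q₂.edges ++ q₁.edges.map (Sym2.map antip) := by
        rw [SimpleGraph.Walk.edges_append, SimpleGraph.Walk.edges_copy,
          SimpleGraph.Walk.edges_map]
        rfl
      refine ⟨projQ w, (q₂.copy hprojw (projQ_antip U)).append (q₁.map antipHom),
        ⟨isPath_of_nodup_dirs _ (by rw [hdq]; exact hnodF), by rw [hdq]; exact hnodF⟩,
        q₂.edges, q₁.edges.map (Sym2.map antip), b, heq, hq₂col, ?_⟩
      intro e he
      obtain ⟨e', he', rfl⟩ := List.mem_map.mp he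
      exact hq₁col e' he' 
  · -- B → A
    intro hB n hn c hc
    obtain ⟨u, p, ⟨hpath, hnodup⟩, l₁, l₂, b, hedges, h1, h2⟩ := hB n hn c
    obtain ⟨w, p₁, p₂, hp, he1, he2⟩ := split_by_edges p l₁ l₂ hedges
    subst hp
    rw [dirs_append] at hnodup
    have hdirsq : dirs (p₂.append (p₁.map antipHom)) = dirs p₂ ++ dirs p₁ := by
      rw [dirs_append, dirs_map_antip]
    have hnod : (dirs p₂ ++ dirs p₁).Nodup := List.nodup_append_comm.mp hnodup
    refine ⟨w, p₂.append (p₁.map antipHom),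
      ⟨isPath_of_nodup_dirs _ (by rw [hdirsq]; exact hnod), by rw [hdirsq]; exact hnod⟩,
      !b, ?_⟩
    intro e he
    rw [SimpleGraph.Walk.edges_append, List.mem_append] at he
    rcases he with he | he
    · exact h2 e (he2 ▸ he)
    · rw [SimpleGraph.Walk.edges_map, List.mem_map] at he
      obtain ⟨e', he', rfl⟩ := he
      revert he'
      refine Sym2.ind (fun x y he' => ?_) e'
      have hadj := p₁.adj_of_mem_edges he'
      show c s(antip x, antip y) = !b
      rw [antip_colour_eq hc hadj, h1 _ (he1 ▸ he')]
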